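/- For every Gauss code D there exists a set S of chords of D such that the Gauss code obtained from D by the crossing change at S can be transformed into the empty code by a finite sequence of C1 and W moves alone. -/

import Mathlib

/-!
Gauss codes for welded knots.

A Gauss code is a cyclic word in which each chord label occurs exactly twice,
once as a tail (`isHead = false`) and once as a head (`isHead = true`), both
occurrences carrying the common sign of the chord.  We represent the cyclic
word by a linear list of entries, working up to rotation (`List.rotate`) and
injective relabelling of the chords.
-/

/-- An endpoint of a chord: `(chord label, isHead, sign)`, where `isHead = false`
means a tail (over-passing) endpoint and `isHead = true` a head (under-passing)
endpoint, and the sign `true`/`false` stands for `+1`/`-1`. -/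
abbrev GEntry : Type := ℕ × Bool × Bool

/-- A (linear representative of a cyclic) word of endpoints. -/
abbrev GWord : Type := List GEntry

/-- The set of chord labels occurring in a word. -/
def chordSet (w : GWord) : Set ℕ := {a | ∃ e ∈ w, e.1 = a}

/-- `w` is a Gauss code: every chord label that occurs in `w` occurs exactly
twice, once as a tail and once as a head, with a common sign. -/
def IsGaussCode (w : GWord) : Prop :=
  ∀ a ∈ chordSet w,
    w.countP (fun e => e.1 == a) = 2 ∧
    ∃ s : Bool, (a, false, s) ∈ w ∧ (a, true, s) ∈ w

/-- The crossing change at the set `S` of chords: at every chord of `S`, the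
tail and head markings of its two occurrences are exchanged and its sign is
reversed. -/
def crossingChange (S : Finset ℕ) (w : GWord) : GWord :=
  w.map fun e => if e.1 ∈ S then (e.1, !e.2.1, !e.2.2) else e

/-- Deletion of the chord `a` (both of its endpoints) from the word. -/
def deleteChord (a : ℕ) (w : GWord) : GWord :=
  w.filter fun e => e.1 != a

/-- Equality of words up to cyclic permutation. -/
def RotEq (w w' : GWord) : Prop := ∃ n : ℕ, w' = w.rotate n

/-- Renaming the chords of a word by `f`. -/
def relabelWord (f : ℕ → ℕ) (w : GWord) : GWord := w.map fun e => (f e.1, e.2)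

/-- Equality of words up to cyclic permutation and (injective) renaming of
the chords. -/
def CyclicRename (w w' : GWord) : Prop :=
  ∃ (n : ℕ) (f : ℕ → ℕ), Function.Injective f ∧ w' = relabelWord f (w.rotate n)

/-- Raw C1 move (deleting direction): deletion of a chord whose two endpoints
occupy adjacent positions; the inserting direction is the converse relation. -/
def C1delRaw (u v : GWord) : Prop :=
  ∃ (x y : GWord) (a : ℕ) (h s : Bool),
    (∀ e ∈ x ++ y, e.1 ≠ a) ∧
    u = x ++ (a, h, s) :: (a, !h, s) :: y ∧
    v = x ++ y

/-- Raw W move: interchange of two adjacent endpoints that are both tails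
(of any two chords, regardless of signs). -/
def WRaw (u v : GWord) : Prop :=
  ∃ (x y : GWord) (a b : ℕ) (s t : Bool),
    u = x ++ (a, false, s) :: (b, false, t) :: y ∧
    v = x ++ (b, false, t) :: (a, false, s) :: y

/-- Raw C2 move (deleting direction): deletion of a pair of chords of opposite
signs whose two tails occupy adjacent positions and whose two heads occupy
adjacent positions. -/
def C2delRaw (u v : GWord) : Prop :=
  ∃ (x y z : GWord) (a b : ℕ) (s : Bool),
    a ≠ b ∧
    (∀ e ∈ x ++ y ++ z, e.1 ≠ a ∧ e.1 ≠ b) ∧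
    (u = x ++ (a, false, s) :: (b, false, !s) :: (y ++ (a, true, s) :: (b, true, !s) :: z) ∨
     u = x ++ (a, false, s) :: (b, false, !s) :: (y ++ (b, true, !s) :: (a, true, s) :: z)) ∧
    v = x ++ y ++ z

/-- Raw C3 move: the Gauss-code translation of the planar Reidemeister move of
type 3.  Three strands `A`, `B`, `C` (modelled on the lines `y = -1`, `y = x`,
`y = -x` and their directions `(1,0)`, `(1,1)`, `(-1,1)`, possibly reversed
according to `dA`, `dB`, `dC`) meet pairwise in the chords `a = AB`, `b = AC`,
`c = BC`; `oAB`, `oAC`, `oBC` record which strand passes over in each pair and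
must come from a linear height order.  The six endpoints form three adjacent
pairs, one on each strand, and the move exchanges the order within each pair;
the head/tail pattern is determined by the heights and the signs by the heights
and the directions, as in a planar diagram. -/
def C3Raw (u v : GWord) : Prop :=
  ∃ (x y z t : GWord) (a b c : ℕ) (oAB oAC oBC dA dB dC swap : Bool),
    a ≠ b ∧ a ≠ c ∧ b ≠ c ∧
    (oAB = oBC → oAC = oAB) ∧
    (let sa : Bool := (dA == dB) == oAB
     let sb : Bool := (dA == dC) == oAC
     let sc : Bool := (dB == dC) == oBC
     let PA : GWord :=
       if dA then [(a, !oAB, sa), (b, !oAC, sb)] else [(b, !oAC, sb), (a, !oAB, sa)]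
     let PB : GWord :=
       if dB then [(a, oAB, sa), (c, !oBC, sc)] else [(c, !oBC, sc), (a, oAB, sa)]
     let PC : GWord :=
       if dC then [(b, oAC, sb), (c, oBC, sc)] else [(c, oBC, sc), (b, oAC, sb)]
     let Q1 : GWord := if swap then PC else PB
     let Q2 : GWord := if swap then PB else PC
     u = x ++ PA ++ y ++ Q1 ++ z ++ Q2 ++ t ∧
     v = x ++ PA.reverse ++ y ++ Q1.reverse ++ z ++ Q2.reverse ++ t)

/-- One welded Reidemeister move (C1, C2, C3 or W, in either direction),
performed up to cyclic permutation and renaming of chords. -/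
def WeldedStep (u v : GWord) : Prop :=
  ∃ u₀ v₀ : GWord, CyclicRename u u₀ ∧ CyclicRename v₀ v ∧
    (C1delRaw u₀ v₀ ∨ C1delRaw v₀ u₀ ∨ C2delRaw u₀ v₀ ∨ C2delRaw v₀ u₀ ∨
     C3Raw u₀ v₀ ∨ C3Raw v₀ u₀ ∨ WRaw u₀ v₀)

/-- Welded equivalence: two Gauss codes are welded-equivalent if they are
related by a finite sequence of C1, C2, C3 and W moves (on cyclic words). -/
def WeldedEquiv : GWord → GWord → Prop := Relation.EqvGen WeldedStep

/-- A Gauss code represents the trivial welded knot iff it is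
welded-equivalent to the empty code. -/
def RepresentsTrivial (w : GWord) : Prop := WeldedEquiv w []

/-- One C1 or W move (in either direction), up to cyclic permutation and
renaming of chords. -/
def CWStep (u v : GWord) : Prop :=
  ∃ u₀ v₀ : GWord, CyclicRename u u₀ ∧ CyclicRename v₀ v ∧
    (C1delRaw u₀ v₀ ∨ C1delRaw v₀ u₀ ∨ WRaw u₀ v₀)

/-- Relatedness by a finite sequence of C1 and W moves alone. -/
def CWEquiv : GWord → GWord → Prop := Relation.EqvGen CWStep

/-- One W move, up to cyclic permutation. -/
def WStepRot (u v : GWord) : Prop :=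
  ∃ u₀ v₀ : GWord, RotEq u u₀ ∧ RotEq v₀ v ∧ WRaw u₀ v₀

/-- One deleting C1 move, up to cyclic permutation. -/
def C1StepRot (u v : GWord) : Prop :=
  ∃ u₀ v₀ : GWord, RotEq u u₀ ∧ RotEq v₀ v ∧ C1delRaw u₀ v₀

/-- In the linear word `v`, no chord has its head occurring strictly before
its tail. -/
def TailsFirst (v : GWord) : Prop :=
  ¬ ∃ (x y z : GWord) (a : ℕ) (s s' : Bool),
      v = x ++ (a, true, s) :: (y ++ (a, false, s') :: z)

/-- A Gauss code is descending if the cyclic word can be cut at some point and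
read in one of the two directions so that every chord's tail occurs before its
head. -/
def IsDescending (w : GWord) : Prop :=
  ∃ n : ℕ, TailsFirst (w.rotate n) ∨ TailsFirst ((w.rotate n).reverse)

/-- `c(D)`: the minimal number of chords of a Gauss code representing the same
welded knot as `D`. -/
noncomputable def minCrossing (D : GWord) : ℕ :=
  sInf {n : ℕ | ∃ D' : GWord, IsGaussCode D' ∧ WeldedEquiv D D' ∧ (chordSet D').ncard = n}

/-- `u(D)`: the minimal cardinality of a set `S` of chords of `D` such that the
crossing change at `S` turns `D` into a Gauss code representing the trivial
welded knot. -/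
noncomputable def unknottingNumWord (D : GWord) : ℕ :=
  sInf {k : ℕ | ∃ S : Finset ℕ, ↑S ⊆ chordSet D ∧ S.card = k ∧
    WeldedEquiv (crossingChange S D) []}

/-- `u(K)`: the minimum of `u(D')` over all Gauss codes `D'` representing the
same welded knot as `D`. -/
noncomputable def unknottingNum (D : GWord) : ℕ :=
  sInf {k : ℕ | ∃ D' : GWord, IsGaussCode D' ∧ WeldedEquiv D D' ∧ unknottingNumWord D' = k}
/-! ### Auxiliary machinery for Statement 11 -/

/-- The sublist of entries of `w` carrying chord label `a`. -/
def labL (a : ℕ) (w : GWord) : GWord := w.filter (fun e => e.1 == a)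

/-- Sublist formulation of "tails first": no chord has a head occurring
(strictly) before one of its tails. -/
def TF (w : GWord) : Prop :=
  ∀ (a : ℕ) (s s' : Bool), ¬ List.Sublist [(a, true, s), (a, false, s')] w

/-- `true` iff the first occurrence of chord `a` in `w` is a head. -/
def badFst (a : ℕ) (w : GWord) : Bool :=
  ((labL a w).head?.map (fun e => e.2.1)).getD false

lemma sub2 {e1 e2 : GEntry} (x y z : GWord) :
    List.Sublist [e1, e2] (x ++ e1 :: (y ++ e2 :: z)) := by
  have h2 : List.Sublist [e2] (y ++ e2 :: z) :=
    ((List.nil_sublist z).cons₂ e2).trans (List.sublist_append_right y _)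
  exact (h2.cons₂ e1).trans (List.sublist_append_right x _)

lemma two_mem {l : List GEntry} {u v : GEntry} (hl : l.length = 2)
    (hu : u ∈ l) (hv : v ∈ l) (huv : u ≠ v) : l = [u, v] ∨ l = [v, u] := by
  match l, hl with
  | [c, d], _ =>
    simp only [List.mem_cons, List.mem_singleton, List.not_mem_nil, or_false] at hu hv
    rcases hu with rfl | rfl
    · rcases hv with rfl | rfl
      · exact absurd rfl huv
      · exact Or.inl rfl
    · rcases hv with rfl | rfl
      · exact Or.inr rfl
      · exact absurd rfl huv

lemma cyclicRename_refl (w : GWord) : CyclicRename w w :=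
  ⟨0, id, fun _ _ h => h, by simp [relabelWord, List.rotate_zero]⟩

lemma cwEquiv_of_W {u v : GWord} (h : WRaw u v) : CWEquiv u v :=
  Relation.EqvGen.rel _ _
    ⟨u, v, cyclicRename_refl u, cyclicRename_refl v, Or.inr (Or.inr h)⟩

lemma cwEquiv_of_C1 {u v : GWord} (h : C1delRaw u v) : CWEquiv u v :=
  Relation.EqvGen.rel _ _
    ⟨u, v, cyclicRename_refl u, cyclicRename_refl v, Or.inl h⟩

/-- Moving a tail to the right past a block of tails, by W moves. -/
lemma w_shuffle (a : ℕ) (s : Bool) :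
    ∀ (p : GWord), (∀ e ∈ p, e.2.1 = false) → ∀ (x y : GWord),
      CWEquiv (x ++ (a, false, s) :: (p ++ y)) (x ++ p ++ (a, false, s) :: y) := by
  intro p
  induction p with
  | nil => intro _ x y; simp only [List.nil_append, List.append_nil]; exact Relation.EqvGen.refl _
  | cons e p ih =>
    intro hp x y
    obtain ⟨b, fb, tb⟩ := e
    have hfb : fb = false := hp (b, fb, tb) (by simp)
    subst hfb
    have h1 : CWEquiv (x ++ (a, false, s) :: ((b, false, tb) :: p ++ y))
        (x ++ (b, false, tb) :: (a, false, s) :: (p ++ y)) :=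
      cwEquiv_of_W ⟨x, p ++ y, a, b, s, tb, by simp, by simp⟩
    have h2 := ih (fun e he => hp e (by simp [he])) (x ++ [(b, false, tb)]) y
    have h2' : CWEquiv (x ++ (b, false, tb) :: (a, false, s) :: (p ++ y))
        (x ++ (b, false, tb) :: p ++ (a, false, s) :: y) := by
      simpa using h2
    exact Relation.EqvGen.trans _ _ _ h1 h2'

/-- A tails-first Gauss code reduces to the empty word by C1 and W moves. -/
lemma reduce : ∀ (n : ℕ) (w : GWord), w.length ≤ n → IsGaussCode w → TF w →
    CWEquiv w [] := by
  intro n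
  induction n with
  | zero =>
    intro w hlen _ _
    have : w = [] := List.length_eq_zero_iff.mp (Nat.le_zero.mp hlen)
    exact this ▸ Relation.EqvGen.refl _
  | succ n ih =>
    intro w hlen hG hTF
    rcases eq_or_ne w [] with rfl | hne
    · exact Relation.EqvGen.refl _
    -- there is a head in `w`
    obtain ⟨e0, he0⟩ := List.exists_mem_of_ne_nil w hne
    have ha0 : e0.1 ∈ chordSet w := ⟨e0, he0, rfl⟩
    obtain ⟨-, s0, -, hhd0⟩ := hG e0.1 ha0
    -- split at the first head
    set P : GEntry → Bool := fun e => !e.2.1 with hP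
    have hr : w.dropWhile P ≠ [] := by
      intro h
      have := List.dropWhile_eq_nil_iff.mp h _ hhd0
      simp [hP] at this
    obtain ⟨h0, q, hq⟩ : ∃ h0 q, w.dropWhile P = h0 :: q := by
      cases hdw : w.dropWhile P with
      | nil => exact absurd hdw hr
      | cons h0 q => exact ⟨h0, q, rfl⟩
    have hhead : P h0 = false := by
      have h' := List.head_dropWhile_not P hr
      have hh0 : (List.dropWhile P w).head hr = h0 := by simp [hq]
      rwa [hh0] at h'
    obtain ⟨a, hb, s⟩ := h0
    have hbtrue : hb = true := by simpa [hP] using hhead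
    subst hbtrue
    set p : GWord := w.takeWhile P with hp
    have hw : w = p ++ (a, true, s) :: q := by
      rw [hp, ← hq, List.takeWhile_append_dropWhile]
    have hptails : ∀ e ∈ p, e.2.1 = false := by
      intro e he
      have := List.mem_takeWhile_imp he
      simpa [hP] using this
    -- the chord `a`
    have haw : (a, true, s) ∈ w := by rw [hw]; simp
    have ha : a ∈ chordSet w := ⟨_, haw, rfl⟩
    obtain ⟨hcnt, σ, htl, hhd⟩ := hG a ha
    have hlab2 : (labL a w).length = 2 := by
      rw [labL, ← List.countP_eq_length_filter]; exact hcnt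
    have hmem1 : ((a, false, σ) : GEntry) ∈ labL a w :=
      List.mem_filter.mpr ⟨htl, by simp⟩
    have hmem2 : ((a, true, σ) : GEntry) ∈ labL a w :=
      List.mem_filter.mpr ⟨hhd, by simp⟩
    have hlab : labL a w = [(a, false, σ), (a, true, σ)] := by
      rcases two_mem hlab2 hmem1 hmem2 (by simp) with h | h
      · exact h
      · exfalso
        refine hTF a σ σ ?_
        rw [← h]
        exact List.filter_sublist
    have hsσ : s = σ := by
      have : ((a, true, s) : GEntry) ∈ labL a w :=
        List.mem_filter.mpr ⟨haw, by simp⟩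
      rw [hlab] at this
      simp at this
      exact this
    subst hsσ
    -- the tail of `a` lies in `p`
    have htlp : ((a, false, s) : GEntry) ∈ p := by
      rw [hw] at htl
      rcases List.mem_append.mp htl with h | h
      · exact h
      · rcases List.mem_cons.mp h with h | h
        · simp at h
        · exfalso
          obtain ⟨y', z', hyz⟩ := List.append_of_mem h
          refine hTF a s s ?_
          rw [hw, hyz]
          exact sub2 p y' z'
    obtain ⟨p1, p2, hp12⟩ := List.append_of_mem htlp
    have hw2 : w = p1 ++ (a, false, s) :: (p2 ++ (a, true, s) :: q) := by
      rw [hw, hp12]; simp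
    -- no other occurrences of `a`
    have hnoa : ∀ e ∈ (p1 ++ p2) ++ q, e.1 ≠ a := by
      have hsplit : labL a w =
          labL a p1 ++ (a, false, s) :: (labL a p2 ++ (a, true, s) :: labL a q) := by
        rw [hw2, labL]
        simp [labL, List.filter_append]
      rw [hlab] at hsplit
      have hlen : (labL a p1).length + (labL a p2).length + (labL a q).length = 0 := by
        have := congrArg List.length hsplit
        simp at this
        omega
      have h1 : labL a p1 = [] := List.length_eq_zero_iff.mp (by omega)
      have h2 : labL a p2 = [] := List.length_eq_zero_iff.mp (by omega)
      have h3 : labL a q = [] := List.length_eq_zero_iff.mp (by omega)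
      intro e he hea
      rcases List.mem_append.mp he with he' | he'
      · rcases List.mem_append.mp he' with he'' | he''
        · exact (List.filter_eq_nil_iff.mp h1 e he'') (by simp [hea])
        · exact (List.filter_eq_nil_iff.mp h2 e he'') (by simp [hea])
      · exact (List.filter_eq_nil_iff.mp h3 e he') (by simp [hea])
    -- W moves then one C1 move
    have hp2tails : ∀ e ∈ p2, e.2.1 = false := fun e he =>
      hptails e (by rw [hp12]; simp [he])
    have hshuf : CWEquiv w ((p1 ++ p2) ++ (a, false, s) :: (a, true, s) :: q) := by
      have := w_shuffle a s p2 hp2tails p1 ((a, true, s) :: q)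
      rw [hw2]
      simpa using this
    have hc1 : C1delRaw ((p1 ++ p2) ++ (a, false, s) :: (a, true, s) :: q)
        ((p1 ++ p2) ++ q) := by
      refine ⟨p1 ++ p2, q, a, false, s, ?_, by simp, rfl⟩
      intro e he
      exact hnoa e (by simpa using he)
    -- the smaller word
    set v : GWord := (p1 ++ p2) ++ q with hv
    have hvsub : v.Sublist w := by
      rw [hw2, hv, List.append_assoc]
      refine (List.Sublist.refl p1).append ?_
      refine List.Sublist.trans ?_ (List.sublist_cons_self _ _)
      exact (List.Sublist.refl p2).append (List.sublist_cons_self _ _)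
    have hTFv : TF v := fun b t t' h => hTF b t t' (h.trans hvsub)
    have hGv : IsGaussCode v := by
      intro b hb
      obtain ⟨e, hev, heb⟩ := hb
      have hba : b ≠ a := heb ▸ hnoa e hev
      have hbw : b ∈ chordSet w := ⟨e, hvsub.subset hev, heb⟩
      obtain ⟨hcntb, τ, htlb, hhdb⟩ := hG b hbw
      constructor
      · have hvw : List.countP (fun e => e.1 == b) v = List.countP (fun e => e.1 == b) w := by
          rw [hw2, hv]
          simp [List.countP_append, List.countP_cons, Ne.symm hba]
        rw [hvw]; exact hcntb
      · refine ⟨τ, ?_, ?_⟩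
        · rw [hw2] at htlb
          rw [hv]
          rcases List.mem_append.mp htlb with h | h
          · simp [h]
          · rcases List.mem_cons.mp h with h | h
            · exact absurd (congrArg Prod.fst h) hba
            · rcases List.mem_append.mp h with h | h
              · simp [h]
              · rcases List.mem_cons.mp h with h | h
                · exact absurd (congrArg Prod.fst h) hba
                · simp [h]
        · rw [hw2] at hhdb
          rw [hv]
          rcases List.mem_append.mp hhdb with h | h
          · simp [h]
          · rcases List.mem_cons.mp h with h | h
            · exact absurd (congrArg Prod.fst h) hba
            · rcases List.mem_append.mp h with h | h
              · simp [h]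
              · rcases List.mem_cons.mp h with h | h
                · exact absurd (congrArg Prod.fst h) hba
                · simp [h]
    have hlenv : v.length ≤ n := by
      have hlw := congrArg List.length hw2
      rw [hv]
      simp only [List.length_append, List.length_cons] at hlw ⊢
      omega
    exact Relation.EqvGen.trans _ _ _ hshuf
      (Relation.EqvGen.trans _ _ _ (cwEquiv_of_C1 hc1) (ih v hlenv hGv hTFv))

/-- The map performed entrywise by `crossingChange`. -/
def ccFun (S : Finset ℕ) : GEntry → GEntry :=
  fun e => if e.1 ∈ S then (e.1, !e.2.1, !e.2.2) else e

lemma ccFun_fst (S : Finset ℕ) (e : GEntry) : (ccFun S e).1 = e.1 := by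
  unfold ccFun; split <;> rfl

lemma crossingChange_eq_map (S : Finset ℕ) (w : GWord) :
    crossingChange S w = w.map (ccFun S) := rfl

lemma labL_crossingChange (S : Finset ℕ) (a : ℕ) (w : GWord) :
    labL a (crossingChange S w) = (labL a w).map (ccFun S) := by
  rw [crossingChange_eq_map, labL, labL, List.filter_map]
  congr 1
  exact List.filter_congr (fun e _ => by simp [Function.comp, ccFun_fst])

lemma chordSet_crossingChange (S : Finset ℕ) (w : GWord) :
    chordSet (crossingChange S w) = chordSet w := by
  ext a
  constructor
  · rintro ⟨e, he, rfl⟩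
    rw [crossingChange_eq_map] at he
    obtain ⟨e', he', rfl⟩ := List.mem_map.mp he
    exact ⟨e', he', (ccFun_fst S e').symm⟩
  · rintro ⟨e, he, rfl⟩
    exact ⟨ccFun S e, List.mem_map_of_mem he, ccFun_fst S e⟩

lemma isGaussCode_crossingChange (S : Finset ℕ) {w : GWord} (hG : IsGaussCode w) :
    IsGaussCode (crossingChange S w) := by
  intro a ha
  rw [chordSet_crossingChange] at ha
  obtain ⟨hcnt, σ, htl, hhd⟩ := hG a ha
  constructor
  · rw [crossingChange_eq_map, List.countP_map]
    rw [← hcnt]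
    exact List.countP_congr (fun e _ => by simp [Function.comp, ccFun_fst])
  · by_cases haS : a ∈ S
    · refine ⟨!σ, ?_, ?_⟩
      · have : ccFun S (a, true, σ) = (a, false, !σ) := by simp [ccFun, haS]
        rw [crossingChange_eq_map, ← this]
        exact List.mem_map_of_mem hhd
      · have : ccFun S (a, false, σ) = (a, true, !σ) := by simp [ccFun, haS]
        rw [crossingChange_eq_map, ← this]
        exact List.mem_map_of_mem htl
    · refine ⟨σ, ?_, ?_⟩
      · have : ccFun S (a, false, σ) = (a, false, σ) := by simp [ccFun, haS]
        rw [crossingChange_eq_map, ← this]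
        exact List.mem_map_of_mem htl
      · have : ccFun S (a, true, σ) = (a, true, σ) := by simp [ccFun, haS]
        rw [crossingChange_eq_map, ← this]
        exact List.mem_map_of_mem hhd

/-- For every Gauss code `D` there exists a set `S` of
chords of `D` such that the code obtained from `D` by the crossing change at
`S` can be transformed into the empty code by a finite sequence of C1 and W
moves alone. -/
theorem crossing_changes_then_C1_W_trivial (D : GWord) (hD : IsGaussCode D) :
    ∃ S : Finset ℕ, ↑S ⊆ chordSet D ∧ CWEquiv (crossingChange S D) [] := by
  classical
  set S : Finset ℕ :=
    (D.map Prod.fst).toFinset.filter (fun a => badFst a D = true) with hS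
  have hSsub : ↑S ⊆ chordSet D := by
    intro a haS
    rw [hS] at haS
    simp only [Finset.coe_filter, Set.mem_setOf_eq, Finset.mem_coe,
      List.mem_toFinset, List.mem_map] at haS
    obtain ⟨⟨e, he, rfl⟩, -⟩ := haS
    exact ⟨e, he, rfl⟩
  refine ⟨S, hSsub, ?_⟩
  have hTF : TF (crossingChange S D) := by
    intro a s s' hsub
    -- `a` occurs in `D`
    have haD : a ∈ chordSet D := by
      rw [← chordSet_crossingChange S D]
      exact ⟨(a, true, s), hsub.subset List.mem_cons_self, rfl⟩
    obtain ⟨hcnt, σ, htl, hhd⟩ := hD a haD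
    have hlab2 : (labL a D).length = 2 := by
      rw [labL, ← List.countP_eq_length_filter]; exact hcnt
    have hmem1 : ((a, false, σ) : GEntry) ∈ labL a D := List.mem_filter.mpr ⟨htl, by simp⟩
    have hmem2 : ((a, true, σ) : GEntry) ∈ labL a D := List.mem_filter.mpr ⟨hhd, by simp⟩
    -- push the bad sublist into `labL a`
    have hsubL : List.Sublist [((a, true, s) : GEntry), (a, false, s')]
        (labL a (crossingChange S D)) := by
      have := hsub.filter (fun e => e.1 == a)
      simpa [labL] using this
    rcases two_mem hlab2 hmem1 hmem2 (by simp) with hcase | hcase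
    · -- first occurrence is a tail, so `a ∉ S` and `crossingChange` fixes entries
      have hbad : badFst a D = false := by simp [badFst, hcase]
      have haS : a ∉ S := by
        rw [hS]; simp [hbad]
      have : labL a (crossingChange S D) = [(a, false, σ), (a, true, σ)] := by
        rw [labL_crossingChange, hcase]
        simp [ccFun, haS]
      rw [this] at hsubL
      have := hsubL.eq_of_length (by simp)
      simp at this
    · -- first occurrence is a head, so `a ∈ S` and `crossingChange` flips entries
      have hbad : badFst a D = true := by simp [badFst, hcase]
      have haS : a ∈ S := by
        rw [hS]
        refine Finset.mem_filter.mpr ⟨?_, hbad⟩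
        obtain ⟨e, he, rfl⟩ := haD
        simp only [List.mem_toFinset, List.mem_map]
        exact ⟨e, he, rfl⟩
      have : labL a (crossingChange S D) = [(a, false, !σ), (a, true, !σ)] := by
        rw [labL_crossingChange, hcase]
        simp [ccFun, haS]
      rw [this] at hsubL
      have := hsubL.eq_of_length (by simp)
      simp at this
  exact reduce (crossingChange S D).length _ le_rfl
    (isGaussCode_crossingChange S hD) hTF
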